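/- Let d ≥ 1 be an integer and let V : ℝ^d × ℝ^d → ℝ be twice continuously differentiable with the operator norm of its second derivative bounded by V̄, and invariant under simultaneous translations: V(x + u, y + u) = V(x, y) for all x, y, u ∈ ℝ^d. Then for all x, y, θ ∈ ℝ^d and all reals γ, γ', |V(x + γθ, y + γ'θ) + V(x − γθ, y − γ'θ) − 2·V(x, y)| ≤ V̄·(γ − γ')²·‖θ‖². -/

import Mathlib

open Real

/-- Mermin–Wagner tuned-action estimate for a translation
invariant two-body potential: if `V : ℝ^d × ℝ^d → ℝ` is `C²` with second
derivative bounded by `V̄` and `V(x+u, y+u) = V(x,y)` for all `u`, then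
`|V(x+γθ, y+γ'θ) + V(x−γθ, y−γ'θ) − 2 V(x,y)| ≤ V̄ (γ−γ')² ‖θ‖²`. -/
theorem tuned_action_second_order_estimate
    (d : ℕ) (hd : 1 ≤ d)
    (V : EuclideanSpace ℝ (Fin d) × EuclideanSpace ℝ (Fin d) → ℝ) (Vbar : ℝ)
    (hV : ContDiff ℝ 2 V)
    (hbound : ∀ p : EuclideanSpace ℝ (Fin d) × EuclideanSpace ℝ (Fin d),
      ‖iteratedFDeriv ℝ 2 V p‖ ≤ Vbar)
    (hinv : ∀ x y u : EuclideanSpace ℝ (Fin d), V (x + u, y + u) = V (x, y))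
    (x y θ : EuclideanSpace ℝ (Fin d)) (γ γ' : ℝ) :
    |V (x + γ • θ, y + γ' • θ) + V (x - γ • θ, y - γ' • θ) - 2 * V (x, y)|
      ≤ Vbar * (γ - γ') ^ 2 * ‖θ‖ ^ 2 := by
  set s : ℝ := γ - γ' with hs
  -- reduce using translation invariance
  have h1 : V (x + γ • θ, y + γ' • θ) = V (x + s • θ, y) := by
    have := hinv (x + s • θ) y (γ' • θ)
    rw [← this]
    congr 1
    rw [add_assoc, ← add_smul]
    congr 2
    rw [hs, sub_add_cancel]
  have h2 : V (x - γ • θ, y - γ' • θ) = V (x - s • θ, y) := by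
    have key := hinv (x - s • θ) y (-(γ' • θ))
    have hγ : x - s • θ + -(γ' • θ) = x - γ • θ := by
      rw [hs, sub_smul]; abel
    rw [hγ, ← sub_eq_add_neg] at key
    exact key
  rw [h1, h2]
  have hVbar : 0 ≤ Vbar := le_trans (norm_nonneg _) (hbound (x, y))
  -- the derivative of V is Lipschitz with constant Vbar
  have hd1 : Differentiable ℝ V := hV.differentiable (by norm_num)
  have hd2 : Differentiable ℝ (fderiv ℝ V) :=
    (hV.fderiv_right (m := 1) (by norm_num)).differentiable (by norm_num)
  have hLip : ∀ p q : EuclideanSpace ℝ (Fin d) × EuclideanSpace ℝ (Fin d),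
      ‖fderiv ℝ V p - fderiv ℝ V q‖ ≤ Vbar * ‖p - q‖ := by
    intro p q
    apply Convex.norm_image_sub_le_of_norm_fderiv_le
      (fun z _ => (hd2 z)) ?_ convex_univ (Set.mem_univ q) (Set.mem_univ p)
    intro z _
    calc ‖fderiv ℝ (fderiv ℝ V) z‖
        = ‖iteratedFDeriv ℝ 0 (fderiv ℝ (fderiv ℝ V)) z‖ := by
          rw [norm_iteratedFDeriv_zero]
      _ = ‖iteratedFDeriv ℝ 1 (fderiv ℝ V) z‖ := norm_iteratedFDeriv_fderiv
      _ = ‖iteratedFDeriv ℝ 2 V z‖ := norm_iteratedFDeriv_fderiv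
      _ ≤ Vbar := hbound z
  -- the one-variable function
  set F : ℝ → ℝ := fun t => V (x + t • θ, y) with hF
  have hF' : ∀ t : ℝ, HasDerivAt F ((fderiv ℝ V (x + t • θ, y)) (θ, 0)) t := by
    intro t
    have hφ : HasDerivAt (fun t : ℝ => (x + t • θ, y)) (θ, (0 : EuclideanSpace ℝ (Fin d))) t := by
      have h1 : HasDerivAt (fun t : ℝ => x + t • θ) θ t := by
        have := ((hasDerivAt_id t).smul_const θ).const_add x
        simpa using this
      exact h1.prodMk (hasDerivAt_const t y)
    exact ((hd1 (x + t • θ, y)).hasFDerivAt.comp_hasDerivAt t hφ)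
  set G : ℝ → ℝ := fun t => F t - F (t - s) with hG
  have hG' : ∀ t : ℝ, HasDerivAt G
      ((fderiv ℝ V (x + t • θ, y)) (θ, 0) - (fderiv ℝ V (x + (t - s) • θ, y)) (θ, 0)) t := by
    intro t
    have h2 : HasDerivAt (fun t : ℝ => F (t - s))
        ((fderiv ℝ V (x + (t - s) • θ, y)) (θ, 0)) t := by
      have := (hF' (t - s)).comp t ((hasDerivAt_id t).sub_const s)
      simp at this
      exact this
    exact (hF' t).sub h2
  set C : ℝ := Vbar * (|s| * ‖θ‖) * ‖θ‖ with hC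
  have hGbound : ∀ t : ℝ, ‖(fderiv ℝ V (x + t • θ, y)) (θ, 0)
      - (fderiv ℝ V (x + (t - s) • θ, y)) (θ, 0)‖ ≤ C := by
    intro t
    have key : ‖fderiv ℝ V (x + t • θ, y) - fderiv ℝ V (x + (t - s) • θ, y)‖
        ≤ Vbar * (|s| * ‖θ‖) := by
      have := hLip (x + t • θ, y) (x + (t - s) • θ, y)
      have hdiff : ((x + t • θ, y) : EuclideanSpace ℝ (Fin d) × EuclideanSpace ℝ (Fin d))
          - (x + (t - s) • θ, y) = (s • θ, 0) := by
        ext <;> simp [Prod.sub_def, sub_smul] <;> abel_nf <;>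
          simp [sub_smul, smul_sub] <;> abel
      rw [hdiff] at this
      refine this.trans (le_of_eq ?_)
      have hnn : ‖((s • θ, (0 : EuclideanSpace ℝ (Fin d))) :
          EuclideanSpace ℝ (Fin d) × EuclideanSpace ℝ (Fin d))‖ = |s| * ‖θ‖ := by
        simp only [Prod.norm_def, norm_zero, norm_smul, Real.norm_eq_abs]
        exact max_eq_left (by positivity)
      rw [hnn]
    calc ‖(fderiv ℝ V (x + t • θ, y)) (θ, 0) - (fderiv ℝ V (x + (t - s) • θ, y)) (θ, 0)‖
        = ‖(fderiv ℝ V (x + t • θ, y) - fderiv ℝ V (x + (t - s) • θ, y)) (θ, 0)‖ := by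
          simp
      _ ≤ ‖fderiv ℝ V (x + t • θ, y) - fderiv ℝ V (x + (t - s) • θ, y)‖ * ‖((θ, 0) :
          EuclideanSpace ℝ (Fin d) × EuclideanSpace ℝ (Fin d))‖ :=
          ContinuousLinearMap.le_opNorm _ _
      _ ≤ Vbar * (|s| * ‖θ‖) * ‖((θ, 0) :
          EuclideanSpace ℝ (Fin d) × EuclideanSpace ℝ (Fin d))‖ := by
          apply mul_le_mul_of_nonneg_right key (norm_nonneg _)
      _ = C := by
          rw [hC]; congr 1
          simp only [Prod.norm_def, norm_zero]
          exact max_eq_left (norm_nonneg θ)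
  have main : ‖G s - G 0‖ ≤ C * ‖s - (0 : ℝ)‖ := by
    apply Convex.norm_image_sub_le_of_norm_hasDerivWithin_le
      (f := G) (f' := fun t => (fderiv ℝ V (x + t • θ, y)) (θ, 0)
        - (fderiv ℝ V (x + (t - s) • θ, y)) (θ, 0))
      (fun t _ => (hG' t).hasDerivWithinAt) (fun t _ => hGbound t) convex_univ
      (Set.mem_univ 0) (Set.mem_univ s)
  have hGval : G s - G 0 = V (x + s • θ, y) + V (x - s • θ, y) - 2 * V (x, y) := by
    have e1 : x + (0 : ℝ) • θ = x := by simp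
    have e2 : x + (0 - s) • θ = x - s • θ := by
      rw [zero_sub, neg_smul, ← sub_eq_add_neg]
    have e3 : x + (s - s) • θ = x := by simp
    simp only [hG, hF, e1, e2, e3]
    ring
  rw [← hGval]
  calc |G s - G 0| ≤ C * ‖s - (0 : ℝ)‖ := main
    _ = Vbar * (γ - γ') ^ 2 * ‖θ‖ ^ 2 := by
        rw [hC]
        simp only [sub_zero, Real.norm_eq_abs, hs]
        have habs : |γ - γ'| * |γ - γ'| = (γ - γ') ^ 2 := by
          rw [abs_mul_abs_self, sq]
        linear_combination (Vbar * ‖θ‖ * ‖θ‖) * habs
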